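/- The achievable secrecy-rate (inner-bound) expression converges to one bit per channel use as the in-block memory length grows: I(L) → 1 as L → ∞. -/

import Mathlib

open Finset Filter Topology

/-- Binary entropy function with base-2 logarithm. `Real.logb 2 0 = 0`, so
`H2 0 = H2 1 = 0` automatically. -/
noncomputable def H2 (p : ℝ) : ℝ :=
  -(p * Real.logb 2 p) - (1 - p) * Real.logb 2 (1 - p)

/-- Partial sums `s_j = ∑_{k=1}^j c_k` of the beam-budget sequence. -/
noncomputable def s (K B : ℝ) : ℕ → ℝ
  | 0 => 0
  | (j+1) => s K B j + min ((K - s K B j) / 2) B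

/-- The beam-budget sequence: `c_0 = 0` and `c_j = min((K - s_{j-1})/2, B)` for `j ≥ 1`. -/
noncomputable def c (K B : ℝ) : ℕ → ℝ
  | 0 => 0
  | (j+1) => min ((K - s K B j) / 2) B

/-- The `j`-th term of the outer bound (Theorem 1), for `j ≥ 1`. -/
noncomputable def t (K B : ℝ) (j : ℕ) : ℝ :=
  (1 - s K B (j-1) / K) * H2 (c K B j / (K - s K B (j-1))) + s K B (j-1) / K

/-- The outer-bound (Theorem 1) expression `U(L)`. -/
noncomputable def U (K B : ℝ) (L : ℕ) : ℝ :=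
  (1 / (L : ℝ)) * ∑ j ∈ Finset.Icc 1 L, t K B j

/-- The `j`-th eavesdropper-leakage term, for `j ≥ 1` (natural subtraction makes the
middle term vanish at `j = 1` and the final sum empty for `j ≤ 3`). -/
noncomputable def g (K B : ℝ) (j : ℕ) : ℝ :=
  ((K - s K B (j-1)) / K) * H2 (c K B j / K)
  + (c K B (j-1) * (K - s K B (j-2)) / K^2) *
      H2 ((1/2) * c K B (j-1) / (K - s K B (j-2)))
  + ∑ k ∈ Finset.Icc 1 (j-3),
      (1/K) * ((c K B (k+1))^2 / K^2) * (1/2 : ℝ)^(2*(j-k-2)-1)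

/-- The gap `G(L)` between the outer and inner bounds. -/
noncomputable def G (K B : ℝ) (L : ℕ) : ℝ :=
  (1 / (L : ℝ)) * ∑ j ∈ Finset.Icc 1 L, g K B j

/-- The inner-bound (Theorem 2) expression `I(L) = U(L) - G(L)`. -/
noncomputable def Ib (K B : ℝ) (L : ℕ) : ℝ := U K B L - G K B L

/-! ### Auxiliary lemmas -/

lemma H2_eq' (p : ℝ) :
    H2 p = (Real.negMulLog p + Real.negMulLog (1 - p)) / Real.log 2 := by
  simp only [H2, Real.negMulLog, Real.logb]
  ring

lemma H2_continuous : Continuous H2 := by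
  have h : H2 = fun p => (Real.negMulLog p + Real.negMulLog (1 - p)) / Real.log 2 :=
    funext H2_eq'
  rw [h]
  exact (Real.continuous_negMulLog.add
    (Real.continuous_negMulLog.comp (continuous_const.sub continuous_id))).div_const _

lemma H2_zero : H2 0 = 0 := by simp [H2]

lemma H2_half : H2 (1/2 : ℝ) = 1 := by
  have h : Real.logb 2 (1/2 : ℝ) = -1 := by
    rw [one_div, Real.logb_inv, Real.logb_self_eq_one (by norm_num)]
  rw [H2]
  norm_num [h]

section Seq

variable {K B : ℝ}

lemma s_lt_K (hK : 0 < K) (hB : 0 < B) : ∀ j, s K B j < K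
  | 0 => by simpa [s] using hK
  | (j+1) => by
      have ih := s_lt_K hK hB j
      have h1 : min ((K - s K B j) / 2) B ≤ (K - s K B j) / 2 := min_le_left _ _
      simp only [s]
      linarith

lemma d_pos (hK : 0 < K) (hB : 0 < B) (j : ℕ) : 0 < K - s K B j :=
  sub_pos.2 (s_lt_K hK hB j)

lemma c_nonneg (hK : 0 < K) (hB : 0 < B) : ∀ j, 0 ≤ c K B j
  | 0 => by simp [c]
  | (j+1) => by
      have hd := d_pos hK hB j
      simp only [c]
      exact le_min (by linarith) hB.le

lemma s_eq_sum (K B : ℝ) : ∀ n, s K B n = ∑ k ∈ Finset.range n, c K B (k+1)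
  | 0 => by simp [s]
  | (n+1) => by
      rw [Finset.sum_range_succ, ← s_eq_sum K B n]
      rfl

lemma d_tendsto (hK : 0 < K) (hB : 0 < B) :
    Tendsto (fun j => K - s K B j) atTop (𝓝 0) := by
  have hanti : Antitone fun j => K - s K B j := by
    apply antitone_nat_of_succ_le
    intro n
    have hd := d_pos hK hB n
    have h0 : (0:ℝ) ≤ min ((K - s K B n) / 2) B := le_min (by linarith) hB.le
    simp only [s]
    linarith
  have hbdd : BddBelow (Set.range fun j => K - s K B j) := by
    refine ⟨0, ?_⟩
    rintro x ⟨j, rfl⟩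
    exact (d_pos hK hB j).le
  have hlim := tendsto_atTop_ciInf hanti hbdd
  set l := ⨅ j, (K - s K B j) with hl
  have hl0 : 0 ≤ l := le_ciInf fun j => (d_pos hK hB j).le
  have h2 : Tendsto (fun j => K - s K B (j+1)) atTop (𝓝 l) :=
    hlim.comp (tendsto_add_atTop_nat 1)
  have h3 : Tendsto (fun j => (K - s K B j) - min ((K - s K B j) / 2) B) atTop
      (𝓝 (l - min (l/2) B)) :=
    hlim.sub (Tendsto.min (hlim.div_const 2) tendsto_const_nhds)
  have h3' : Tendsto (fun j => K - s K B (j+1)) atTop (𝓝 (l - min (l/2) B)) := by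
    refine h3.congr fun j => ?_
    simp only [s]
    ring
  have huniq : l = l - min (l/2) B := tendsto_nhds_unique h2 h3'
  have hmin : min (l/2) B = 0 := by linarith
  have hle : l ≤ 0 := by
    by_contra hlt
    push_neg at hlt
    have : 0 < min (l/2) B := lt_min (by linarith) hB
    linarith
  have hl00 : l = 0 := le_antisymm hle hl0
  rwa [hl00] at hlim

lemma c_tendsto (hK : 0 < K) (hB : 0 < B) :
    Tendsto (c K B) atTop (𝓝 0) := by
  have h : Tendsto (fun j => c K B (j+1)) atTop (𝓝 0) := by
    have h1 : Tendsto (fun j => min ((K - s K B j) / 2) B) atTop (𝓝 (min ((0:ℝ)/2) B)) :=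
      Tendsto.min ((d_tendsto hK hB).div_const 2) tendsto_const_nhds
    have h2 : min ((0:ℝ)/2) B = 0 := by
      rw [zero_div]
      exact min_eq_left hB.le
    rw [h2] at h1
    exact h1.congr fun j => rfl
  exact (tendsto_add_atTop_iff_nat 1).1 h

end Seq

/-- Cesàro convergence for averages over `Icc 1 L`. -/
lemma cesaro_Icc {u : ℕ → ℝ} {a : ℝ} (h : Tendsto u atTop (𝓝 a)) :
    Tendsto (fun L : ℕ => (1 / (L:ℝ)) * ∑ j ∈ Finset.Icc 1 L, u j) atTop (𝓝 a) := by
  have h1 : Tendsto (fun i : ℕ => u (1 + i)) atTop (𝓝 a) := by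
    exact h.comp (tendsto_atTop_mono (fun n => Nat.le_add_left n 1) tendsto_id)
  refine h1.cesaro.congr fun L => ?_
  rw [one_div]
  congr 1
  rw [← Finset.Ico_add_one_right_eq_Icc, Finset.sum_Ico_eq_sum_range]
  simp

/-- The key bound on the accumulated third (convolution) term of `g`. -/
lemma sumS_le {K B : ℝ} (hK : 0 < K) (hB : 0 < B) (L : ℕ) :
    ∑ j ∈ Finset.Icc 1 L, ∑ k ∈ Finset.Icc 1 (j-3),
      (1/K) * ((c K B (k+1))^2 / K^2) * (1/2 : ℝ)^(2*(j-k-2)-1) ≤ B / K^2 := by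
  set a : ℕ → ℝ := fun k => (1/K) * ((c K B (k+1))^2 / K^2) with ha
  have ha0 : ∀ k, 0 ≤ a k := by
    intro k
    have := c_nonneg hK hB (k+1)
    positivity
  have step1 : ∀ j ∈ Finset.Icc 1 L,
      (∑ k ∈ Finset.Icc 1 (j-3), a k * (1/2 : ℝ)^(2*(j-k-2)-1))
        ≤ ∑ k ∈ Finset.Icc 1 L, a k * (if k+3 ≤ j then (1/2 : ℝ)^(j-k-2) else 0) := by
    intro j hj
    have hjL : j ≤ L := (Finset.mem_Icc.1 hj).2
    have hsub : Finset.Icc 1 (j-3) ⊆ Finset.Icc 1 L :=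
      Finset.Icc_subset_Icc le_rfl (by omega)
    refine le_trans (Finset.sum_le_sum ?_) (Finset.sum_le_sum_of_subset_of_nonneg hsub ?_)
    · intro k hk
      have hk3 : k + 3 ≤ j := by
        have hk' := Finset.mem_Icc.1 hk
        omega
      rw [if_pos hk3]
      refine mul_le_mul_of_nonneg_left ?_ (ha0 k)
      refine pow_le_pow_of_le_one (by norm_num) (by norm_num) ?_
      omega
    · intro k _ _
      split_ifs
      · have := ha0 k
        positivity
      · simp
  have step3 : ∀ k : ℕ,
      (∑ j ∈ Finset.Icc 1 L, if k+3 ≤ j then (1/2 : ℝ)^(j-k-2) else 0) ≤ 1 := by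
    intro k
    rw [← Finset.sum_filter]
    have hfil : (Finset.Icc 1 L).filter (fun j => k+3 ≤ j) = Finset.Icc (k+3) L := by
      ext j
      simp only [Finset.mem_filter, Finset.mem_Icc]
      omega
    rw [hfil, ← Finset.Ico_add_one_right_eq_Icc, Finset.sum_Ico_eq_sum_range]
    calc ∑ i ∈ Finset.range (L+1-(k+3)), (1/2 : ℝ)^(k+3+i-k-2)
        = ∑ i ∈ Finset.range (L+1-(k+3)), (1/2 : ℝ)^i * (1/2) := by
          refine Finset.sum_congr rfl fun i _ => ?_
          rw [show k+3+i-k-2 = i+1 by omega, pow_succ]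
      _ = (∑ i ∈ Finset.range (L+1-(k+3)), (1/2 : ℝ)^i) * (1/2) := by
          rw [Finset.sum_mul]
      _ ≤ 2 * (1/2) := by
          refine mul_le_mul_of_nonneg_right (sum_geometric_two_le _) (by norm_num)
      _ = 1 := by norm_num
  have step4 : ∑ k ∈ Finset.Icc 1 L, a k ≤ B / K^2 := by
    have h1 : ∀ k : ℕ, a k ≤ (B / K^3) * c K B (k+1) := by
      intro k
      have hc0 : 0 ≤ c K B (k+1) := c_nonneg hK hB _
      have hcB : c K B (k+1) ≤ B := by
        simp only [c]
        exact min_le_right _ _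
      have hsq : (c K B (k+1))^2 ≤ B * c K B (k+1) := by nlinarith
      have : a k = (c K B (k+1))^2 / K^3 := by
        rw [ha]; ring
      rw [this]
      rw [div_le_iff₀ (by positivity), mul_comm (B / K^3)]
      calc (c K B (k+1))^2 ≤ B * c K B (k+1) := hsq
        _ = c K B (k+1) * (B / K^3) * K^3 := by field_simp
    calc ∑ k ∈ Finset.Icc 1 L, a k
        ≤ ∑ k ∈ Finset.Icc 1 L, (B / K^3) * c K B (k+1) :=
          Finset.sum_le_sum fun k _ => h1 k
      _ = (B / K^3) * ∑ k ∈ Finset.Icc 1 L, c K B (k+1) := by rw [Finset.mul_sum]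
      _ ≤ (B / K^3) * K := by
          refine mul_le_mul_of_nonneg_left ?_ (by positivity)
          have hsub : Finset.Icc 1 L ⊆ Finset.range (L+1) := by
            intro k hk
            simp only [Finset.mem_range]
            have := (Finset.mem_Icc.1 hk).2
            omega
          calc ∑ k ∈ Finset.Icc 1 L, c K B (k+1)
              ≤ ∑ k ∈ Finset.range (L+1), c K B (k+1) :=
                Finset.sum_le_sum_of_subset_of_nonneg hsub
                  (fun k _ _ => c_nonneg hK hB _)
            _ = s K B (L+1) := (s_eq_sum K B (L+1)).symm
            _ ≤ K := (s_lt_K hK hB _).le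
      _ = B / K^2 := by
          field_simp
  calc ∑ j ∈ Finset.Icc 1 L, ∑ k ∈ Finset.Icc 1 (j-3),
        (1/K) * ((c K B (k+1))^2 / K^2) * (1/2 : ℝ)^(2*(j-k-2)-1)
      ≤ ∑ j ∈ Finset.Icc 1 L, ∑ k ∈ Finset.Icc 1 L,
        a k * (if k+3 ≤ j then (1/2 : ℝ)^(j-k-2) else 0) :=
        Finset.sum_le_sum step1
    _ = ∑ k ∈ Finset.Icc 1 L, a k *
        ∑ j ∈ Finset.Icc 1 L, (if k+3 ≤ j then (1/2 : ℝ)^(j-k-2) else 0) := by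
        rw [Finset.sum_comm]
        exact Finset.sum_congr rfl fun k _ => (Finset.mul_sum _ _ _).symm
    _ ≤ ∑ k ∈ Finset.Icc 1 L, a k :=
        Finset.sum_le_sum fun k _ => mul_le_of_le_one_right (ha0 k) (step3 k)
    _ ≤ B / K^2 := step4

theorem stmt_16 (K : ℕ) (hK : 2 ≤ K) (B : ℝ) (hB : 0 < B) :
    Tendsto (fun L : ℕ => Ib K B L) atTop (𝓝 1) := by
  have hK0 : (0:ℝ) < (K:ℝ) := by
    have : 0 < K := by omega
    exact_mod_cast this
  have hd := d_tendsto (K := (K:ℝ)) (B := B) hK0 hB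
  have h2B : ∀ᶠ j in atTop, (K:ℝ) - s K B j < 2*B :=
    hd.eventually_lt_const (by linarith)
  obtain ⟨N, hN⟩ := eventually_atTop.1 h2B
  have hcval : ∀ j, N ≤ j → c (K:ℝ) B (j+1) = ((K:ℝ) - s K B j) / 2 := by
    intro j hj
    simp only [c]
    exact min_eq_left (by have := hN j hj; linarith)
  -- U tends to 1
  have ht1 : ∀ j, N + 1 ≤ j → t (K:ℝ) B j = 1 := by
    intro j hj
    obtain ⟨i, rfl⟩ : ∃ i, j = i + 1 := ⟨j - 1, by omega⟩
    have hi : N ≤ i := by omega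
    have hd' := d_pos (K := (K:ℝ)) (B := B) hK0 hB i
    have hd0 : (K:ℝ) - s K B i ≠ 0 := ne_of_gt hd'
    simp only [t, Nat.add_sub_cancel, hcval i hi]
    have harg : (((K:ℝ) - s K B i) / 2) / ((K:ℝ) - s K B i) = 1/2 := by
      field_simp
    rw [harg, H2_half]
    ring
  have htt : Tendsto (fun j => t (K:ℝ) B j) atTop (𝓝 1) := by
    have heq : (fun _ : ℕ => (1:ℝ)) =ᶠ[atTop] fun j => t (K:ℝ) B j :=
      eventually_atTop.2 ⟨N+1, fun j hj => (ht1 j hj).symm⟩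
    exact Tendsto.congr' heq tendsto_const_nhds
  have hU : Tendsto (fun L : ℕ => U (K:ℝ) B L) atTop (𝓝 1) := cesaro_Icc htt
  -- G tends to 0
  set A : ℕ → ℝ := fun j =>
    ((K:ℝ) - s K B (j-1)) / K * H2 (c K B j / K)
    + (c K B (j-1) * ((K:ℝ) - s K B (j-2)) / (K:ℝ)^2) *
        H2 ((1/2) * c K B (j-1) / ((K:ℝ) - s K B (j-2))) with hA_def
  set S : ℕ → ℝ := fun j => ∑ k ∈ Finset.Icc 1 (j-3),
      (1/(K:ℝ)) * ((c (K:ℝ) B (k+1))^2 / (K:ℝ)^2) * (1/2 : ℝ)^(2*(j-k-2)-1) with hS_def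
  have hgAS : ∀ j, g (K:ℝ) B j = A j + S j := fun j => rfl
  have hc : Tendsto (c (K:ℝ) B) atTop (𝓝 0) := c_tendsto hK0 hB
  have hd1 : Tendsto (fun j => (K:ℝ) - s K B (j-1)) atTop (𝓝 0) :=
    hd.comp (tendsto_sub_atTop_nat 1)
  have hd2 : Tendsto (fun j => (K:ℝ) - s K B (j-2)) atTop (𝓝 0) :=
    hd.comp (tendsto_sub_atTop_nat 2)
  have hc1 : Tendsto (fun j => c (K:ℝ) B (j-1)) atTop (𝓝 0) :=
    hc.comp (tendsto_sub_atTop_nat 1)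
  have hT1 : Tendsto (fun j => ((K:ℝ) - s K B (j-1)) / K * H2 (c K B j / K))
      atTop (𝓝 0) := by
    have h0 : Tendsto (fun j => c (K:ℝ) B j / K) atTop (𝓝 0) := by
      simpa using hc.div_const (K:ℝ)
    have hH : Tendsto (fun j => H2 (c (K:ℝ) B j / K)) atTop (𝓝 0) := by
      have := (H2_continuous.tendsto 0).comp h0
      simpa [H2_zero, Function.comp_def] using this
    have := (hd1.div_const (K:ℝ)).mul hH
    simpa using this
  have hT2 : Tendsto (fun j => (c (K:ℝ) B (j-1) * ((K:ℝ) - s K B (j-2)) / (K:ℝ)^2) *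
      H2 ((1/2) * c (K:ℝ) B (j-1) / ((K:ℝ) - s K B (j-2)))) atTop (𝓝 0) := by
    have hT2' : Tendsto (fun j => (c (K:ℝ) B (j-1) * ((K:ℝ) - s K B (j-2)) / (K:ℝ)^2) *
        H2 (1/4)) atTop (𝓝 0) := by
      have := ((hc1.mul hd2).div_const ((K:ℝ)^2)).mul_const (H2 (1/4))
      simpa using this
    refine Tendsto.congr' ?_ hT2'
    refine eventually_atTop.2 ⟨N+2, fun j hj => ?_⟩
    obtain ⟨i, rfl⟩ : ∃ i, j = i + 2 := ⟨j - 2, by omega⟩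
    have hi : N ≤ i := by omega
    have hd' := d_pos (K := (K:ℝ)) (B := B) hK0 hB i
    have hd0 : (K:ℝ) - s K B i ≠ 0 := ne_of_gt hd'
    have e1 : i + 2 - 1 = i + 1 := by omega
    have e2 : i + 2 - 2 = i := by omega
    dsimp only
    rw [e1, e2, hcval i hi]
    congr 1
    have : (1/2 : ℝ) * (((K:ℝ) - s K B i) / 2) / ((K:ℝ) - s K B i) = 1/4 := by
      field_simp
      ring
    rw [this]
  have hA : Tendsto A atTop (𝓝 0) := by
    have h := hT1.add hT2
    rw [add_zero] at h
    exact h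
  have hAsum : Tendsto (fun L : ℕ => (1 / (L:ℝ)) * ∑ j ∈ Finset.Icc 1 L, A j)
      atTop (𝓝 0) := cesaro_Icc hA
  have hSsum : Tendsto (fun L : ℕ => (1 / (L:ℝ)) * ∑ j ∈ Finset.Icc 1 L, S j)
      atTop (𝓝 0) := by
    refine squeeze_zero (g := fun L : ℕ => (1 / (L:ℝ)) * (B / (K:ℝ)^2)) ?_ ?_ ?_
    · intro L
      have hS0 : ∀ j, 0 ≤ S j := by
        intro j
        refine Finset.sum_nonneg fun k _ => ?_
        have := c_nonneg (K := (K:ℝ)) (B := B) hK0 hB (k+1)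
        positivity
      have : 0 ≤ ∑ j ∈ Finset.Icc 1 L, S j := Finset.sum_nonneg fun j _ => hS0 j
      positivity
    · intro L
      refine mul_le_mul_of_nonneg_left ?_ (by positivity)
      exact sumS_le hK0 hB L
    · have := tendsto_one_div_atTop_nhds_zero_nat.mul_const (B / (K:ℝ)^2)
      simpa using this
  have hG : Tendsto (fun L : ℕ => G (K:ℝ) B L) atTop (𝓝 0) := by
    have heq : ∀ L : ℕ, G (K:ℝ) B L =
        (1 / (L:ℝ)) * ∑ j ∈ Finset.Icc 1 L, A j
        + (1 / (L:ℝ)) * ∑ j ∈ Finset.Icc 1 L, S j := by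
      intro L
      rw [G, show ∑ j ∈ Finset.Icc 1 L, g (K:ℝ) B j
          = ∑ j ∈ Finset.Icc 1 L, (A j + S j) from
          Finset.sum_congr rfl fun j _ => hgAS j,
        Finset.sum_add_distrib, mul_add]
    have := hAsum.add hSsum
    rw [add_zero] at this
    exact this.congr fun L => (heq L).symm
  have := hU.sub hG
  rw [sub_zero] at this
  exact this
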